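/- Let 0 < q < 1 be a real number, let y > 0 be a real number, and let n be a natural number. Then Σ_{k=0}^{n} (-1)^k [n choose k]_q · q^{binom(k+1,2) - n(y+k)} · [y]_q / [y+k]_q = [n]_q! / ( [y+1]_q [y+2]_q ⋯ [y+n]_q ). -/

import Mathlib

/-- The `q`-number of a real `t`: `[t]_q = (1 - q^t)/(1 - q)` (real exponentiation). -/
noncomputable def qnumR (q t : ℝ) : ℝ := (1 - q ^ t) / (1 - q)

/-- The `q`-number `[m]_q = (1 - q^m)/(1 - q)`. -/
noncomputable def qnum (q : ℝ) (m : ℕ) : ℝ := (1 - q ^ m) / (1 - q)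

/-- The `q`-factorial `[n]_q! = [1]_q [2]_q ⋯ [n]_q`. -/
noncomputable def qfact (q : ℝ) (n : ℕ) : ℝ := ∏ i ∈ Finset.range n, qnum q (i + 1)

/-- The `q`-binomial coefficient `[n choose k]_q = [n]_q! / ([k]_q! [n-k]_q!)`. -/
noncomputable def qbinom (q : ℝ) (n k : ℕ) : ℝ := qfact q n / (qfact q k * qfact q (n - k))

noncomputable def trm (q y : ℝ) (n k : ℕ) : ℝ :=
  (-1 : ℝ) ^ k * qbinom q n k
    * q ^ ((((k + 1).choose 2 : ℕ) : ℝ) - (n : ℝ) * (y + (k : ℝ)))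
    * (qnumR q y / qnumR q (y + (k : ℝ)))

variable {q y : ℝ}

lemma qnum_pos (hq0 : 0 < q) (hq1 : q < 1) {m : ℕ} (hm : 0 < m) : 0 < qnum q m := by
  have h1 : q ^ m < 1 := pow_lt_one₀ hq0.le hq1 hm.ne'
  have : 0 < 1 - q := by linarith
  exact div_pos (by linarith) this

lemma qfact_pos (hq0 : 0 < q) (hq1 : q < 1) (n : ℕ) : 0 < qfact q n :=
  Finset.prod_pos fun i _ => qnum_pos hq0 hq1 (Nat.succ_pos i)

lemma qnumR_pos (hq0 : 0 < q) (hq1 : q < 1) {t : ℝ} (ht : 0 < t) : 0 < qnumR q t := by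
  have h1 : q ^ t < 1 := Real.rpow_lt_one hq0.le hq1 ht
  have : 0 < 1 - q := by linarith
  exact div_pos (by linarith) this

lemma qfact_succ (n : ℕ) : qfact q (n + 1) = qfact q n * qnum q (n + 1) :=
  Finset.prod_range_succ _ _

lemma qfact_zero : qfact q 0 = 1 := Finset.prod_range_zero _

lemma qbinom_zero (hq0 : 0 < q) (hq1 : q < 1) (n : ℕ) : qbinom q n 0 = 1 := by
  simp [qbinom, qfact_zero, (qfact_pos hq0 hq1 n).ne']

lemma qbinom_self (hq0 : 0 < q) (hq1 : q < 1) (n : ℕ) : qbinom q n n = 1 := by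
  simp [qbinom, qfact_zero, (qfact_pos hq0 hq1 n).ne']

lemma qbinom_pascal (hq0 : 0 < q) (hq1 : q < 1) {n j : ℕ} (h : j < n) :
    qbinom q (n + 1) (j + 1) = qbinom q n j + q ^ (j + 1) * qbinom q n (j + 1) := by
  obtain ⟨m, rfl⟩ : ∃ m, n = j + m + 1 := ⟨n - j - 1, by omega⟩
  have e1 : j + m + 1 + 1 - (j + 1) = m + 1 := by omega
  have e2 : j + m + 1 - j = m + 1 := by omega
  have e3 : j + m + 1 - (j + 1) = m := by omega
  rw [qbinom, qbinom, qbinom, e1, e2, e3]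
  have hq : (1 : ℝ) - q ≠ 0 := by linarith
  have h1 := (qfact_pos hq0 hq1 (j+1)).ne'
  have h2 := (qfact_pos hq0 hq1 (m+1)).ne'
  have h3 := (qfact_pos hq0 hq1 j).ne'
  have h4 := (qfact_pos hq0 hq1 m).ne'
  have h5 := (qnum_pos hq0 hq1 (Nat.succ_pos j)).ne'
  have h6 := (qnum_pos hq0 hq1 (Nat.succ_pos m)).ne'
  rw [show j + m + 1 + 1 = (j + m + 1) + 1 by ring, qfact_succ (j+m+1),
    qfact_succ j, qfact_succ m]
  have key : qnum q (j + m + 1 + 1) = qnum q (j + 1) + q ^ (j + 1) * qnum q (m + 1) := by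
    rw [qnum, qnum, qnum]
    field_simp
    ring
  rw [key]
  field_simp

lemma Apart (hq0 : 0 < q) (n k : ℕ) :
    q ^ (-y) * trm q y n k
      = (-1 : ℝ) ^ k * (q ^ k * qbinom q n k)
        * q ^ ((((k + 1).choose 2 : ℕ) : ℝ) - ((n : ℝ) + 1) * (y + (k : ℝ)))
        * (qnumR q y / qnumR q (y + (k : ℝ))) := by
  unfold trm
  rw [← Real.rpow_natCast q k]
  have hE : q ^ ((((k + 1).choose 2 : ℕ) : ℝ) - ((n : ℝ) + 1) * (y + (k : ℝ))) * q ^ ((k : ℝ))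
      = q ^ (-y) * q ^ ((((k + 1).choose 2 : ℕ) : ℝ) - (n : ℝ) * (y + (k : ℝ))) := by
    rw [← Real.rpow_add hq0, ← Real.rpow_add hq0]
    congr 1
    ring
  linear_combination (-((-1 : ℝ) ^ k) * qbinom q n k * (qnumR q y / qnumR q (y + (k : ℝ)))) * hE

lemma Bpart (hq0 : 0 < q) (hq1 : q < 1) (hy : 0 < y) (n j : ℕ) :
    -(q ^ (-y)) * (qnumR q y / qnumR q (y + 1)) * trm q (y + 1) n j
      = (-1 : ℝ) ^ (j + 1) * qbinom q n j
        * q ^ ((((j + 1 + 1).choose 2 : ℕ) : ℝ) - ((n : ℝ) + 1) * (y + ((j : ℝ) + 1)))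
        * (qnumR q y / qnumR q (y + ((j : ℝ) + 1))) := by
  have h1 : qnumR q (y + 1) ≠ 0 := (qnumR_pos hq0 hq1 (by linarith)).ne'
  have hj : (0 : ℝ) ≤ (j : ℝ) := Nat.cast_nonneg j
  have h2 : qnumR q (y + ((j : ℝ) + 1)) ≠ 0 := (qnumR_pos hq0 hq1 (by linarith)).ne'
  unfold trm
  rw [show y + 1 + (j : ℝ) = y + ((j : ℝ) + 1) by ring]
  have hch : (j + 1 + 1).choose 2 = (j + 1).choose 2 + (j + 1) := by
    rw [Nat.choose_succ_succ, Nat.choose_one_right, Nat.add_comm]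
  have hE : q ^ ((((j + 1 + 1).choose 2 : ℕ) : ℝ) - ((n : ℝ) + 1) * (y + ((j : ℝ) + 1)))
      = q ^ (-y) * q ^ ((((j + 1).choose 2 : ℕ) : ℝ) - (n : ℝ) * (y + ((j : ℝ) + 1))) := by
    rw [← Real.rpow_add hq0]
    congr 1
    push_cast [hch]
    ring
  rw [hE]
  field_simp
  ring

lemma astep (hq0 : 0 < q) (hq1 : q < 1) (n : ℕ) :
    trm q y (n + 1) 0 = q ^ (-y) * trm q y n 0 := by
  rw [Apart hq0 n 0]
  unfold trm
  rw [qbinom_zero hq0 hq1, qbinom_zero hq0 hq1]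
  push_cast
  ring

lemma cstep (hq0 : 0 < q) (hq1 : q < 1) (hy : 0 < y) (n : ℕ) :
    trm q y (n + 1) (n + 1)
      = -(q ^ (-y)) * (qnumR q y / qnumR q (y + 1)) * trm q (y + 1) n n := by
  rw [Bpart hq0 hq1 hy n n]
  unfold trm
  rw [qbinom_self hq0 hq1, qbinom_self hq0 hq1]
  push_cast
  ring

lemma bstep (hq0 : 0 < q) (hq1 : q < 1) (hy : 0 < y) {n j : ℕ} (h : j < n) :
    trm q y (n + 1) (j + 1)
      = q ^ (-y) * trm q y n (j + 1)
        + -(q ^ (-y)) * (qnumR q y / qnumR q (y + 1)) * trm q (y + 1) n j := by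
  rw [Apart hq0 n (j + 1), Bpart hq0 hq1 hy n j]
  unfold trm
  rw [qbinom_pascal hq0 hq1 h]
  push_cast
  ring

lemma main_lemma (hq0 : 0 < q) (hq1 : q < 1) (n : ℕ) :
    ∀ y : ℝ, 0 < y →
      ∑ k ∈ Finset.range (n + 1), trm q y n k
        = qfact q n / ∏ i ∈ Finset.range n, qnumR q (y + ((i : ℝ) + 1)) := by
  induction n with
  | zero =>
    intro y hy
    have h0 : qnumR q y ≠ 0 := (qnumR_pos hq0 hq1 hy).ne'
    simp [trm, qbinom_zero hq0 hq1, qfact_zero, h0]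
  | succ n ih =>
    intro y hy
    have ihy := ih y hy
    have ihy1 := ih (y + 1) (by linarith)
    have hb : ∀ j ∈ Finset.range n, trm q y (n + 1) (j + 1)
        = q ^ (-y) * trm q y n (j + 1)
          + -(q ^ (-y)) * (qnumR q y / qnumR q (y + 1)) * trm q (y + 1) n j :=
      fun j hj => bstep hq0 hq1 hy (Finset.mem_range.mp hj)
    rw [Finset.sum_range_succ', Finset.sum_range_succ, Finset.sum_congr rfl hb,
      cstep hq0 hq1 hy, astep hq0 hq1, Finset.sum_add_distrib]
    have S1 : (∑ j ∈ Finset.range n, q ^ (-y) * trm q y n (j + 1)) + q ^ (-y) * trm q y n 0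
        = q ^ (-y) * ∑ k ∈ Finset.range (n + 1), trm q y n k := by
      rw [Finset.mul_sum, Finset.sum_range_succ']
    have S2 : (∑ j ∈ Finset.range n, -(q ^ (-y)) * (qnumR q y / qnumR q (y + 1)) * trm q (y + 1) n j)
          + -(q ^ (-y)) * (qnumR q y / qnumR q (y + 1)) * trm q (y + 1) n n
        = -(q ^ (-y)) * (qnumR q y / qnumR q (y + 1)) * ∑ k ∈ Finset.range (n + 1), trm q (y + 1) n k := by
      rw [Finset.mul_sum, Finset.sum_range_succ]
    calc (∑ j ∈ Finset.range n, q ^ (-y) * trm q y n (j + 1)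
            + ∑ j ∈ Finset.range n, -(q ^ (-y)) * (qnumR q y / qnumR q (y + 1)) * trm q (y + 1) n j)
          + -(q ^ (-y)) * (qnumR q y / qnumR q (y + 1)) * trm q (y + 1) n n
          + q ^ (-y) * trm q y n 0
        = ((∑ j ∈ Finset.range n, q ^ (-y) * trm q y n (j + 1)) + q ^ (-y) * trm q y n 0)
          + ((∑ j ∈ Finset.range n, -(q ^ (-y)) * (qnumR q y / qnumR q (y + 1)) * trm q (y + 1) n j)
            + -(q ^ (-y)) * (qnumR q y / qnumR q (y + 1)) * trm q (y + 1) n n) := by ring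
      _ = q ^ (-y) * (qfact q n / ∏ i ∈ Finset.range n, qnumR q (y + ((i : ℝ) + 1)))
          + -(q ^ (-y)) * (qnumR q y / qnumR q (y + 1))
            * (qfact q n / ∏ i ∈ Finset.range n, qnumR q (y + 1 + ((i : ℝ) + 1))) := by
        rw [S1, S2, ihy, ihy1]
      _ = qfact q (n + 1) / ∏ i ∈ Finset.range (n + 1), qnumR q (y + ((i : ℝ) + 1)) := by
        have hjn : (0 : ℝ) ≤ (n : ℝ) := Nat.cast_nonneg n
        have hW : qnumR q (y + ((n : ℝ) + 1)) = qnumR q y + q ^ y * qnum q (n + 1) := by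
          have hx : q ^ (y + ((n : ℝ) + 1)) = q ^ y * q ^ (n + 1 : ℕ) := by
            rw [show ((n : ℝ) + 1) = ((n + 1 : ℕ) : ℝ) by push_cast; ring,
              Real.rpow_add hq0, Real.rpow_natCast]
          rw [qnumR, qnumR, qnum, hx]
          have hq : (1 : ℝ) - q ≠ 0 := by linarith
          field_simp
          ring
        have hP : (∏ i ∈ Finset.range n, qnumR q (y + ((i : ℝ) + 1))) ≠ 0 :=
          (Finset.prod_pos fun i _ => qnumR_pos hq0 hq1
            (by have := Nat.cast_nonneg (α := ℝ) i; linarith)).ne'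
        have hP1 : (∏ i ∈ Finset.range n, qnumR q (y + 1 + ((i : ℝ) + 1))) ≠ 0 :=
          (Finset.prod_pos fun i _ => qnumR_pos hq0 hq1
            (by have := Nat.cast_nonneg (α := ℝ) i; linarith)).ne'
        have hB : qnumR q (y + 1) ≠ 0 := (qnumR_pos hq0 hq1 (by linarith)).ne'
        have hWpos : 0 < qnumR q (y + ((n : ℝ) + 1)) := qnumR_pos hq0 hq1 (by linarith)
        have hqy : q ^ y ≠ 0 := (Real.rpow_pos_of_pos hq0 y).ne'
        have hP2a : (∏ i ∈ Finset.range (n + 1), qnumR q (y + ((i : ℝ) + 1)))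
            = (∏ i ∈ Finset.range n, qnumR q (y + ((i : ℝ) + 1))) * qnumR q (y + ((n : ℝ) + 1)) :=
          Finset.prod_range_succ _ _
        have hP2b : (∏ i ∈ Finset.range (n + 1), qnumR q (y + ((i : ℝ) + 1)))
            = (∏ i ∈ Finset.range n, qnumR q (y + 1 + ((i : ℝ) + 1))) * qnumR q (y + 1) := by
          rw [Finset.prod_range_succ']
          congr 1
          · exact Finset.prod_congr rfl fun i _ => by norm_num; congr 1; ring
          · norm_num
        have hP1eq : (∏ i ∈ Finset.range n, qnumR q (y + 1 + ((i : ℝ) + 1)))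
            = (∏ i ∈ Finset.range n, qnumR q (y + ((i : ℝ) + 1))) * qnumR q (y + ((n : ℝ) + 1))
              / qnumR q (y + 1) := by
          field_simp
          rw [← hP2a, hP2b]
        have hWne : qnumR q y + q ^ y * qnum q (n + 1) ≠ 0 := hW ▸ hWpos.ne'
        rw [hP1eq, hP2a, hW, qfact_succ, Real.rpow_neg hq0.le]
        field_simp
        ring

/-- `Σ_{k=0}^{n} (-1)^k [n choose k]_q q^{binom(k+1,2) - n(y+k)} [y]_q/[y+k]_q
    = [n]_q! / ([y+1]_q [y+2]_q ⋯ [y+n]_q)`. -/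
theorem stmt3 (q : ℝ) (hq0 : 0 < q) (hq1 : q < 1) (y : ℝ) (hy : 0 < y) (n : ℕ) :
    ∑ k ∈ Finset.range (n + 1),
        (-1 : ℝ) ^ k * qbinom q n k
          * q ^ ((((k + 1).choose 2 : ℕ) : ℝ) - (n : ℝ) * (y + (k : ℝ)))
          * (qnumR q y / qnumR q (y + (k : ℝ)))
      = qfact q n / ∏ i ∈ Finset.range n, qnumR q (y + ((i : ℝ) + 1)) := by
  have := main_lemma hq0 hq1 n y hy
  simpa [trm] using this
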